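/- Let Y ∈ F_q^{N×(n+m)} and let (r, L̂, Ê) ∈ F_q^{n×m} × F_q^{n×μ} × F_q^{δ×m} be a reduction of Y, i.e., there exists U ⊆ {1,…,n} with |U| = μ, I_U^T r = 0, I_U^T L̂ = −I_{μ×μ}, rank Ê = δ, and such that the row space of [[I_n + L̂ I_U^T , r],[0 , Ê]] equals the row space of Y. Then for every x ∈ F_q^{n×m}, with X = [I_n | x], the subspace distance satisfies d_S(⟨X⟩, ⟨Y⟩) = 2·rank [[L̂ , r − x],[0 , Ê]] − (μ + δ). -/

import Mathlib

open Matrix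

/-- The row space of a matrix: the span of its rows. -/
noncomputable def rowSpace {F : Type*} [Field F] {ι κ : Type*}
    (M : Matrix ι κ F) : Submodule F (κ → F) :=
  Submodule.span F (Set.range fun i => M i)

/-- The subspace distance `d_S(U,V) = dim(U + V) - dim(U ∩ V)`. -/
noncomputable def sDist {F : Type*} [Field F] {κ : Type*}
    (U V : Submodule F (κ → F)) : ℕ :=
  Module.finrank F ↥(U ⊔ V) - Module.finrank F ↥(U ⊓ V)

/-- `I_U`: the `n × μ` matrix whose columns are the columns of the `n × n`
identity matrix indexed by the set `U` (in increasing order). -/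
def unitColumns (F : Type*) [Field F] {n μ : ℕ}
    (U : Finset (Fin n)) (hU : U.card = μ) : Matrix (Fin n) (Fin μ) F :=
  Matrix.of fun i k => if i = U.orderEmbOfFin hU k then 1 else 0

section AuxLemmas

variable {F : Type*} [Field F]

lemma rowSpace_eq_range {ι κ : Type*} [Fintype ι] (M : Matrix ι κ F) :
    rowSpace M = LinearMap.range M.vecMulLinear :=
  (range_vecMulLinear M).symm

lemma mem_rowSpace {ι κ : Type*} [Fintype ι] (M : Matrix ι κ F) (y : κ → F) :
    y ∈ rowSpace M ↔ ∃ v, v ᵥ* M = y := by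
  rw [rowSpace_eq_range]
  exact ⟨fun ⟨v, hv⟩ => ⟨v, hv⟩, fun ⟨v, hv⟩ => ⟨v, hv⟩⟩

lemma finrank_rowSpace_eq_rank {ι κ : Type*} [Fintype ι] [Fintype κ] (M : Matrix ι κ F) :
    Module.finrank F (rowSpace M) = M.rank := by
  rw [← Matrix.rank_transpose, Matrix.rank_eq_finrank_span_cols]; rfl

lemma rowSpace_fromRows {ι₁ ι₂ κ : Type*} (A : Matrix ι₁ κ F) (B : Matrix ι₂ κ F) :
    rowSpace (fromRows A B) = rowSpace A ⊔ rowSpace B := by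
  unfold rowSpace
  rw [← Submodule.span_union, ← Set.Sum.elim_range]
  rfl

lemma rowSpace_mul_le {ι ι' κ : Type*} [Fintype ι] [Fintype ι'] (G : Matrix ι' ι F)
    (M : Matrix ι κ F) : rowSpace (G * M) ≤ rowSpace M := by
  intro y hy
  rw [mem_rowSpace] at hy ⊢
  obtain ⟨v, rfl⟩ := hy
  exact ⟨v ᵥ* G, Matrix.vecMul_vecMul v G M⟩

lemma rowSpace_unit_mul {ι κ : Type*} [Fintype ι] [DecidableEq ι] (P : Matrix ι ι F)
    (hP : IsUnit P) (M : Matrix ι κ F) : rowSpace (P * M) = rowSpace M := by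
  obtain ⟨u, rfl⟩ := hP
  refine le_antisymm (rowSpace_mul_le _ _) ?_
  have : M = (↑u⁻¹ : Matrix ι ι F) * ((u : Matrix ι ι F) * M) := by
    rw [← Matrix.mul_assoc, ← Units.val_mul, inv_mul_cancel, Units.val_one, Matrix.one_mul]
  nth_rewrite 1 [this]
  exact rowSpace_mul_le _ _

lemma rowSpace_inf_eq_bot {ι₁ ι₂ κ₁ κ₂ : Type*} [Fintype ι₁] [Fintype ι₂]
    (P₁ : Matrix ι₁ κ₁ F) (P₂ : Matrix ι₁ κ₂ F) (Q₂ : Matrix ι₂ κ₂ F)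
    (H : ∀ v : ι₁ → F, v ᵥ* P₁ = 0 → v ᵥ* P₂ = 0) :
    rowSpace (fromCols P₁ P₂) ⊓ rowSpace (fromCols (0 : Matrix ι₂ κ₁ F) Q₂) = ⊥ := by
  rw [eq_bot_iff]
  rintro y hy
  rw [Submodule.mem_inf, mem_rowSpace, mem_rowSpace] at hy
  obtain ⟨⟨v, hv⟩, ⟨w, hw⟩⟩ := hy
  rw [vecMul_fromCols] at hv hw
  rw [Matrix.vecMul_zero] at hw
  have h1 : v ᵥ* P₁ = 0 := by
    funext j
    have := congrFun (hv.trans hw.symm) (Sum.inl j)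
    simpa using this
  have h2 := H v h1
  rw [Submodule.mem_bot, ← hv, h1, h2]
  ext (j | j) <;> simp

lemma finrank_rowSpace_sup {ι₁ ι₂ κ₁ κ₂ : Type*} [Fintype ι₁] [Fintype ι₂] [Fintype κ₁]
    [Fintype κ₂] (P₁ : Matrix ι₁ κ₁ F) (P₂ : Matrix ι₁ κ₂ F) (Q₂ : Matrix ι₂ κ₂ F)
    (H : ∀ v : ι₁ → F, v ᵥ* P₁ = 0 → v ᵥ* P₂ = 0) :
    Module.finrank F
        ↥(rowSpace (fromCols P₁ P₂) ⊔ rowSpace (fromCols (0 : Matrix ι₂ κ₁ F) Q₂))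
      = (fromCols P₁ P₂).rank + (fromCols (0 : Matrix ι₂ κ₁ F) Q₂).rank := by
  have h := Submodule.finrank_sup_add_finrank_inf_eq
    (rowSpace (fromCols P₁ P₂)) (rowSpace (fromCols (0 : Matrix ι₂ κ₁ F) Q₂))
  rw [rowSpace_inf_eq_bot P₁ P₂ Q₂ H, finrank_bot, add_zero] at h
  rw [h, finrank_rowSpace_eq_rank, finrank_rowSpace_eq_rank]

lemma rank_fromCols_zero_left {ι κ₁ κ₂ : Type*} [Fintype ι] [Fintype κ₁] [Fintype κ₂]
    [DecidableEq κ₁] [DecidableEq κ₂] (B : Matrix ι κ₂ F) :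
    (fromCols (0 : Matrix ι κ₁ F) B).rank = B.rank := by
  apply le_antisymm
  · have h : fromCols (0 : Matrix ι κ₁ F) B = B * fromCols (0 : Matrix κ₂ κ₁ F) (1 : Matrix κ₂ κ₂ F) := by
      rw [mul_fromCols, Matrix.mul_zero, Matrix.mul_one]
    rw [h]
    exact Matrix.rank_mul_le_left _ _
  · have h : B = fromCols (0 : Matrix ι κ₁ F) B * fromRows (0 : Matrix κ₁ κ₂ F) (1 : Matrix κ₂ κ₂ F) := by
      rw [fromCols_mul_fromRows, Matrix.zero_mul, Matrix.mul_one, zero_add]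
    conv_lhs => rw [h]
    exact Matrix.rank_mul_le_left _ _

lemma rank_fromCols_eq_left {ι κ₂ : Type*} [Fintype ι] [DecidableEq ι] [Fintype κ₂]
    (D : Matrix ι ι F) (r : Matrix ι κ₂ F) (h : D * r = r) :
    (fromCols D r).rank = D.rank := by
  apply le_antisymm
  · have hf : fromCols D r = D * fromCols 1 r := by
      rw [mul_fromCols, Matrix.mul_one, h]
    rw [hf]
    exact Matrix.rank_mul_le_left _ _
  · have hf : D = fromCols D r * fromRows (1 : Matrix ι ι F) (0 : Matrix κ₂ ι F) := by
      rw [fromCols_mul_fromRows, Matrix.mul_zero, Matrix.mul_one, add_zero]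
    conv_lhs => rw [hf]
    exact Matrix.rank_mul_le_left _ _

lemma unitColumns_key {n μ : ℕ} (U : Finset (Fin n)) (hU : U.card = μ) (i j : Fin n) :
    (∑ k : Fin μ, (if i = U.orderEmbOfFin hU k then (1 : F) else 0) *
        (if j = U.orderEmbOfFin hU k then (1 : F) else 0))
      = if i = j ∧ i ∈ U then 1 else 0 := by
  by_cases hi : i ∈ U
  · have : i ∈ Set.range (U.orderEmbOfFin hU) := by
      rw [Finset.range_orderEmbOfFin]; exact hi
    obtain ⟨k₀, hk₀⟩ := this
    rw [Finset.sum_eq_single k₀]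
    · rw [hk₀, if_pos rfl, one_mul]
      rcases eq_or_ne i j with rfl | hij
      · simp [hi]
      · rw [if_neg (Ne.symm hij), if_neg (by simp [hij])]
    · intro k _ hk
      rw [if_neg, zero_mul]
      intro h
      exact hk ((U.orderEmbOfFin hU).injective (h.symm.trans hk₀.symm))
    · simp
  · rw [Finset.sum_eq_zero, if_neg (by tauto)]
    intro k _
    rw [if_neg, zero_mul]
    intro h
    exact hi (h ▸ Finset.orderEmbOfFin_mem U hU k)

lemma transpose_mul_unitColumns {n μ : ℕ} (U : Finset (Fin n)) (hU : U.card = μ) :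
    (unitColumns F U hU)ᵀ * unitColumns F U hU = 1 := by
  ext k k'
  simp only [Matrix.mul_apply, transpose_apply, unitColumns, of_apply]
  rw [Finset.sum_eq_single (U.orderEmbOfFin hU k)]
  · rw [if_pos rfl, one_mul, Matrix.one_apply]
    congr 1
    simp only [eq_iff_iff]
    constructor
    · intro h
      exact (U.orderEmbOfFin hU).injective h.symm ▸ rfl
    · rintro rfl; rfl
  · intro i _ hik
    rw [if_neg hik, zero_mul]
  · simp

lemma unitColumns_mul_transpose {n μ : ℕ} (U : Finset (Fin n)) (hU : U.card = μ) :
    unitColumns F U hU * (unitColumns F U hU)ᵀ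
      = diagonal (fun i => if i ∈ U then (1 : F) else 0) := by
  ext i j
  simp only [Matrix.mul_apply, transpose_apply, unitColumns, of_apply]
  rw [unitColumns_key U hU i j]
  rcases eq_or_ne i j with rfl | hij
  · simp
  · simp [diagonal_apply_ne _ hij, hij]

lemma isUnit_of_mul_both {ι : Type*} [Fintype ι] [DecidableEq ι] (A B : Matrix ι ι F)
    (h1 : A * B = 1) (h2 : B * A = 1) : IsUnit A := ⟨⟨A, B, h1, h2⟩, rfl⟩

lemma isUnit_one_add_sq_zero {ι : Type*} [Fintype ι] [DecidableEq ι] (P : Matrix ι ι F)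
    (h : P * P = 0) : IsUnit (1 + P) := by
  refine isUnit_of_mul_both _ (1 - P) ?_ ?_
  · have : (1 + P) * (1 - P) = 1 - P * P := by noncomm_ring
    rw [this, h, sub_zero]
  · have : (1 - P) * (1 + P) = 1 - P * P := by noncomm_ring
    rw [this, h, sub_zero]

lemma isUnit_one_sub_sq_zero {ι : Type*} [Fintype ι] [DecidableEq ι] (P : Matrix ι ι F)
    (h : P * P = 0) : IsUnit (1 - P) := by
  have h' : (-P) * (-P) = 0 := by rw [Matrix.neg_mul, Matrix.mul_neg, h, neg_neg]
  have := isUnit_one_add_sq_zero (-P) h'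
  rwa [← sub_eq_add_neg] at this

lemma matrix_isUnit_neg_one {ι : Type*} [Fintype ι] [DecidableEq ι] :
    IsUnit (-1 : Matrix ι ι F) :=
  isUnit_of_mul_both _ (-1) (by simp) (by simp)

lemma rank_diag_compl [DecidableEq F] {n μ : ℕ} (U : Finset (Fin n)) (hU : U.card = μ) :
    (diagonal (fun i => if i ∈ U then (0 : F) else 1)).rank + μ = n := by
  rw [Matrix.rank_diagonal]
  have he : ∀ i : Fin n, ((if i ∈ U then (0 : F) else 1) ≠ 0) ↔ ¬(i ∈ U) := by
    intro i; split <;> simp_all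
  rw [Fintype.card_congr (Equiv.subtypeEquivRight he), Fintype.card_subtype_compl]
  have h1 : Fintype.card {x : Fin n // x ∈ U} = μ := by
    simpa using (Fintype.card_coe U).trans hU
  have h2 : μ ≤ n := by
    rw [← hU]
    simpa using Finset.card_le_univ U
  rw [h1, Fintype.card_fin]
  omega

end AuxLemmas

/-- if `(r, L, E)` is a reduction of `Y` then, for every `x`,
`d_S(⟨[I | x]⟩, ⟨Y⟩) = 2·rank [[L, r − x],[0, E]] − (μ + δ)`. -/
theorem sDist_of_reduction
    {F : Type*} [Field F] [Fintype F] [DecidableEq F] {N n m μ δ : ℕ}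
    (Y : Matrix (Fin N) (Fin n ⊕ Fin m) F)
    (r : Matrix (Fin n) (Fin m) F) (L : Matrix (Fin n) (Fin μ) F)
    (E : Matrix (Fin δ) (Fin m) F)
    (U : Finset (Fin n)) (hU : U.card = μ)
    (h1 : (unitColumns F U hU)ᵀ * r = 0)
    (h2 : (unitColumns F U hU)ᵀ * L = -1)
    (h3 : E.rank = δ)
    (h4 : rowSpace (Matrix.fromBlocks
        (1 + L * (unitColumns F U hU)ᵀ) r 0 E) = rowSpace Y)
    (x : Matrix (Fin n) (Fin m) F) :
    (sDist (rowSpace (Matrix.fromCols (1 : Matrix (Fin n) (Fin n) F) x))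
        (rowSpace Y) : ℤ)
      = 2 * ((Matrix.fromBlocks L (r - x) 0 E).rank : ℤ) - ((μ : ℤ) + (δ : ℤ)) := by
  have hKI : (unitColumns F U hU)ᵀ * unitColumns F U hU = 1 :=
    transpose_mul_unitColumns U hU
  have hIK : unitColumns F U hU * (unitColumns F U hU)ᵀ
      = diagonal (fun i => if i ∈ U then (1 : F) else 0) :=
    unitColumns_mul_transpose U hU
  set Iu := unitColumns F U hU with hIu_def
  set K := (unitColumns F U hU)ᵀ with hK_def
  set S : Matrix (Fin n) (Fin m) F := r - x - L * (K * x) with hS_def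
  set D : Matrix (Fin n) (Fin n) F := 1 - Iu * K with hD_def
  set X : Matrix (Fin n) (Fin n ⊕ Fin m) F := fromCols 1 x with hX_def
  set Z : Matrix (Fin n ⊕ Fin δ) (Fin n ⊕ Fin m) F := fromBlocks (1 + L * K) r 0 E with hZ_def
  set ρ : ℕ := (fromRows S E).rank with hρ_def
  -- algebraic facts
  have hKS : K * S = 0 := by
    rw [hS_def, Matrix.mul_sub, Matrix.mul_sub,
      show K * (L * (K * x)) = (K * L) * (K * x) from (Matrix.mul_assoc K L (K * x)).symm,
      h1, h2, Matrix.neg_mul, Matrix.one_mul]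
    abel
  have hK0 : K * (L + Iu) = 0 := by
    rw [Matrix.mul_add, h2, hKI]
    exact neg_add_cancel 1
  set P : Matrix (Fin n) (Fin n) F := (L + Iu) * K with hP_def
  have hPP : P * P = 0 := by
    rw [hP_def, Matrix.mul_assoc, ← Matrix.mul_assoc K, hK0, Matrix.zero_mul, Matrix.mul_zero]
  have hA : IsUnit (1 + P) := isUnit_one_add_sq_zero P hPP
  have hC0 : IsUnit (1 - P) := isUnit_one_sub_sq_zero P hPP
  have hAL : (1 + P) * L = -Iu := by
    rw [Matrix.add_mul, Matrix.one_mul, hP_def, Matrix.mul_assoc, h2, Matrix.mul_neg,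
      Matrix.mul_one]
    abel
  have hAS : (1 + P) * S = S := by
    rw [Matrix.add_mul, Matrix.one_mul, hP_def, Matrix.mul_assoc, hKS, Matrix.mul_zero, add_zero]
  have hDIu : D * Iu = 0 := by
    rw [hD_def, Matrix.sub_mul, Matrix.one_mul, Matrix.mul_assoc, hKI, Matrix.mul_one, sub_self]
  have hDS : D * S = S := by
    rw [hD_def, Matrix.sub_mul, Matrix.one_mul, Matrix.mul_assoc, hKS, Matrix.mul_zero, sub_zero]
  have hDr : D * r = r := by
    rw [hD_def, Matrix.sub_mul, Matrix.one_mul, Matrix.mul_assoc, h1, Matrix.mul_zero, sub_zero]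
  have hZC : (1 + L * K) * (1 - P) = D := by
    have e1 : (1 + L * K) * (1 - P) = 1 + L * K - P - (L * K) * P := by noncomm_ring
    have e2 : (L * K) * P = 0 := by
      rw [hP_def, Matrix.mul_assoc L K, ← Matrix.mul_assoc K, hK0, Matrix.zero_mul,
        Matrix.mul_zero]
    rw [e1, e2, sub_zero, hP_def, Matrix.add_mul, hD_def]
    abel
  have hDdiag : D = diagonal (fun i => if i ∈ U then (0 : F) else 1) := by
    rw [hD_def, hIK, ← diagonal_one, diagonal_sub]
    exact congrArg _ (funext fun i => by split <;> simp)
  -- rank of the goal matrix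
  set Qc : Matrix (Fin μ ⊕ Fin m) (Fin μ ⊕ Fin m) F :=
    fromBlocks 1 (-(K * x)) 0 1 with hQc_def
  have hQc : IsUnit Qc.det := by
    rw [hQc_def, det_fromBlocks_zero₂₁, det_one, det_one, mul_one]
    exact isUnit_one
  have hMQ : fromBlocks L (r - x) (0 : Matrix (Fin δ) (Fin μ) F) E * Qc
      = fromBlocks L S (0 : Matrix (Fin δ) (Fin μ) F) E := by
    rw [hQc_def, fromBlocks_multiply, fromBlocks_inj]
    refine ⟨by simp, ?_, by simp, by simp⟩
    rw [Matrix.mul_neg, Matrix.mul_one, hS_def]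
    abel
  set Al : Matrix (Fin n ⊕ Fin δ) (Fin n ⊕ Fin δ) F :=
    fromBlocks (1 + P) 0 0 1 with hAl_def
  have hAldet : IsUnit Al.det := by
    rw [hAl_def, det_fromBlocks_zero₂₁, det_one, mul_one]
    exact (Matrix.isUnit_iff_isUnit_det _).mp hA
  have hAM : Al * fromBlocks L S (0 : Matrix (Fin δ) (Fin μ) F) E
      = fromBlocks (-Iu) S (0 : Matrix (Fin δ) (Fin μ) F) E := by
    rw [hAl_def, fromBlocks_multiply, fromBlocks_inj]
    exact ⟨by simp [hAL], by simp [hAS], by simp, by simp⟩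
  set N₁ : Matrix (Fin μ) (Fin μ ⊕ Fin m) F := fromCols (-1) 0 with hN₁_def
  set N₂ : Matrix (Fin n ⊕ Fin δ) (Fin μ ⊕ Fin m) F :=
    fromBlocks 0 S (0 : Matrix (Fin δ) (Fin μ) F) E with hN₂_def
  have hGM : fromRows (fromCols K (0 : Matrix (Fin μ) (Fin δ) F))
        (fromBlocks D 0 (0 : Matrix (Fin δ) (Fin n) F) 1)
        * fromBlocks (-Iu) S (0 : Matrix (Fin δ) (Fin μ) F) E
      = fromRows N₁ N₂ := by
    rw [fromRows_mul, fromCols_mul_fromBlocks, fromBlocks_multiply, fromRows_ext_iff]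
    constructor
    · rw [hN₁_def, Matrix.mul_neg, hKI, hKS]
      simp
    · rw [hN₂_def, fromBlocks_inj]
      exact ⟨by simp [Matrix.mul_neg, hDIu], by simp [hDS], by simp, by simp⟩
  have hHN : fromCols (fromRows Iu (0 : Matrix (Fin δ) (Fin μ) F))
        (1 : Matrix (Fin n ⊕ Fin δ) (Fin n ⊕ Fin δ) F) * fromRows N₁ N₂
      = fromBlocks (-Iu) S (0 : Matrix (Fin δ) (Fin μ) F) E := by
    rw [fromCols_mul_fromRows, Matrix.one_mul, fromRows_mul, Matrix.zero_mul]
    have h5 : Iu * N₁ = fromCols (-Iu) 0 := by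
      rw [hN₁_def, Matrix.mul_fromCols, Matrix.mul_neg, Matrix.mul_one, Matrix.mul_zero]
    rw [h5, show (0 : Matrix (Fin δ) (Fin μ ⊕ Fin m) F) = fromCols 0 0 from
      fromCols_zero.symm, fromRows_fromCols_eq_fromBlocks, hN₂_def, fromBlocks_add]
    rw [fromBlocks_inj]
    exact ⟨by simp, by simp, by simp, by simp⟩
  have hrsN : rowSpace (fromBlocks (-Iu) S (0 : Matrix (Fin δ) (Fin μ) F) E)
      = rowSpace (fromRows N₁ N₂) := by
    refine le_antisymm ?_ ?_
    · rw [← hHN]; exact rowSpace_mul_le _ _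
    · rw [← hGM]; exact rowSpace_mul_le _ _
  have hN₂form : N₂ = fromCols (0 : Matrix (Fin n ⊕ Fin δ) (Fin μ) F) (fromRows S E) := by
    rw [hN₂_def, ← fromCols_fromRows_eq_fromBlocks, fromRows_zero]
  have hrankM : (fromBlocks L (r - x) (0 : Matrix (Fin δ) (Fin μ) F) E).rank = μ + ρ := by
    rw [← Matrix.rank_mul_eq_left_of_isUnit_det Qc _ hQc, hMQ,
      ← Matrix.rank_mul_eq_right_of_isUnit_det Al _ hAldet, hAM,
      ← finrank_rowSpace_eq_rank, hrsN, rowSpace_fromRows, hN₁_def, hN₂form,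
      finrank_rowSpace_sup _ _ _ (fun v _ => Matrix.vecMul_zero v),
      rank_fromCols_zero_left,
      rank_fromCols_eq_left (-1) 0 (Matrix.mul_zero _),
      Matrix.rank_of_isUnit _ matrix_isUnit_neg_one, Fintype.card_fin]
  -- sup computation
  set C : Matrix (Fin n ⊕ Fin δ) (Fin n) F :=
    fromRows (-(1 + L * K)) (0 : Matrix (Fin δ) (Fin n) F) with hC_def
  set Pm : Matrix ((Fin n ⊕ (Fin n ⊕ Fin δ))) ((Fin n ⊕ (Fin n ⊕ Fin δ))) F :=
    fromBlocks 1 0 C 1 with hPm_def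
  have hPmUnit : IsUnit Pm := by
    refine isUnit_of_mul_both _ (fromBlocks 1 0 (-C) 1) ?_ ?_ <;>
      · rw [hPm_def, fromBlocks_multiply]
        simp [Matrix.fromBlocks_one]
  have hPW : Pm * fromRows X Z
      = fromRows X (fromBlocks (0 : Matrix (Fin n) (Fin n) F) S
          (0 : Matrix (Fin δ) (Fin n) F) E) := by
    rw [hPm_def, fromBlocks_mul_fromRows, fromRows_ext_iff]
    constructor
    · simp
    · rw [Matrix.one_mul, hC_def, fromRows_mul, Matrix.zero_mul, hX_def,
        Matrix.mul_fromCols, Matrix.mul_one, hZ_def,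
        show (-(1 + L * K)) * x = -(x + L * (K * x)) by
          rw [Matrix.neg_mul, Matrix.add_mul, Matrix.one_mul, Matrix.mul_assoc],
        show (0 : Matrix (Fin δ) (Fin n ⊕ Fin m) F) = fromCols 0 0 from
          fromCols_zero.symm,
        fromRows_fromCols_eq_fromBlocks, fromBlocks_add, fromBlocks_inj]
      refine ⟨by rw [neg_add_cancel], ?_, by simp, by simp⟩
      rw [hS_def]
      abel
  have hsup_eq : rowSpace X ⊔ rowSpace Y
      = rowSpace X ⊔ rowSpace (fromBlocks (0 : Matrix (Fin n) (Fin n) F) S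
          (0 : Matrix (Fin δ) (Fin n) F) E) := by
    rw [← h4, ← rowSpace_fromRows, ← rowSpace_fromRows, ← hPW, rowSpace_unit_mul _ hPmUnit]
  have hQform : (fromBlocks (0 : Matrix (Fin n) (Fin n) F) S
        (0 : Matrix (Fin δ) (Fin n) F) E)
      = fromCols (0 : Matrix (Fin n ⊕ Fin δ) (Fin n) F) (fromRows S E) := by
    rw [← fromCols_fromRows_eq_fromBlocks, fromRows_zero]
  have hfinsup : Module.finrank F ↥(rowSpace X ⊔ rowSpace Y) = n + ρ := by
    rw [hsup_eq, hX_def, hQform,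
      finrank_rowSpace_sup 1 x (fromRows S E) (fun v hv => by
        rw [Matrix.vecMul_one] at hv
        rw [hv, Matrix.zero_vecMul]),
      rank_fromCols_zero_left, rank_fromCols_eq_left 1 x (Matrix.one_mul x),
      Matrix.rank_one, Fintype.card_fin]
  -- dimension of Y
  set Qr : Matrix (Fin n ⊕ Fin m) (Fin n ⊕ Fin m) F :=
    fromBlocks (1 - P) 0 0 1 with hQr_def
  have hQrdet : IsUnit Qr.det := by
    rw [hQr_def, det_fromBlocks_zero₂₁, det_one, mul_one]
    exact (Matrix.isUnit_iff_isUnit_det _).mp hC0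
  have hZQ : Z * Qr = fromBlocks D r (0 : Matrix (Fin δ) (Fin n) F) E := by
    rw [hZ_def, hQr_def, fromBlocks_multiply, fromBlocks_inj]
    exact ⟨by simp [hZC], by simp, by simp, by simp⟩
  have hfinY : Module.finrank F ↥(rowSpace Y) + μ = n + δ := by
    rw [← h4, finrank_rowSpace_eq_rank, ← Matrix.rank_mul_eq_left_of_isUnit_det Qr Z hQrdet,
      hZQ, show fromBlocks D r (0 : Matrix (Fin δ) (Fin n) F) E
        = fromRows (fromCols D r) (fromCols 0 E) from
        (fromRows_fromCols_eq_fromBlocks _ _ _ _).symm,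
      ← finrank_rowSpace_eq_rank, rowSpace_fromRows,
      finrank_rowSpace_sup D r E (fun v hv => by
        rw [← hDr, ← Matrix.vecMul_vecMul, hv, Matrix.zero_vecMul]),
      rank_fromCols_zero_left, rank_fromCols_eq_left D r hDr, h3, hDdiag]
    have := rank_diag_compl (F := F) U hU
    omega
  have hXfin : Module.finrank F ↥(rowSpace X) = n := by
    rw [finrank_rowSpace_eq_rank, hX_def, rank_fromCols_eq_left 1 x (Matrix.one_mul x),
      Matrix.rank_one, Fintype.card_fin]
  have e4 := Submodule.finrank_sup_add_finrank_inf_eq (rowSpace X) (rowSpace Y)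
  have e5 : Module.finrank F ↥(rowSpace X ⊓ rowSpace Y)
      ≤ Module.finrank F ↥(rowSpace X ⊔ rowSpace Y) :=
    Submodule.finrank_mono (le_trans inf_le_left le_sup_left)
  unfold sDist
  rw [hrankM, Nat.cast_sub e5]
  push_cast
  omega
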